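/- A proper coloring of a graph G is IF-compelling (every rainbow committee induces a subgraph with no isolated vertices) if and only if it is TDom-compelling (every rainbow committee is a total dominating set of G). -/
import Mathlib


open SimpleGraph

/-- A proper coloring of `G` with `k` colors. -/
def ProperColoring {V : Type*} {k : ℕ} (G : SimpleGraph V) (c : V → Fin k) : Prop :=
  ∀ ⦃u v : V⦄, G.Adj u v → c u ≠ c v

/-- `f` selects a rainbow committee of the coloring `c`: one vertex of each color. -/
def IsRainbow {V : Type*} {k : ℕ} (c : V → Fin k) (f : Fin k → V) : Prop :=
  ∀ i : Fin k, c (f i) = i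

/-- The coloring `c` compels property `P`: every rainbow committee has property `P`. -/
def Compels {V : Type*} {k : ℕ} (c : V → Fin k) (P : Set V → Prop) : Prop :=
  ∀ f : Fin k → V, IsRainbow c f → P (Set.range f)

/-- The `P`-compelling chromatic number of `G`: the least number of colors in a proper
coloring, using every color, in which every rainbow committee has property `P`. -/
noncomputable def compellingChromNum {V : Type*} (G : SimpleGraph V) (P : Set V → Prop) : ℕ :=
  sInf {k : ℕ | ∃ c : V → Fin k,
    ProperColoring G c ∧ Function.Surjective c ∧ Compels c P}

/-- A proper coloring is IF-compelling (every rainbow committee induces a subgraph with no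
isolated vertices) iff it is TDom-compelling (every rainbow committee totally dominates). -/
theorem if_compelling_iff_tdom_compelling {V : Type*} [Fintype V] (G : SimpleGraph V)
    {k : ℕ} (c : V → Fin k) (hp : ProperColoring G c) (hs : Function.Surjective c) :
    Compels c (fun S => ∀ v ∈ S, ∃ u ∈ S, G.Adj u v) ↔
      Compels c (fun S => ∀ v : V, ∃ u ∈ S, G.Adj u v) := by
  constructor
  · intro h f hf v
    set g : Fin k → V := Function.update f (c v) v with hg
    have hgr : IsRainbow c g := by
      intro i
      by_cases hi : i = c v
      · subst hi; simp [hg]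
      · simp [hg, Function.update_of_ne hi, hf i]
    obtain ⟨u, hu, hadj⟩ := h g hgr v ⟨c v, by simp [hg]⟩
    obtain ⟨j, rfl⟩ := hu
    by_cases hj : j = c v
    · subst hj; simp [hg] at hadj
    · rw [hg, Function.update_of_ne hj] at hadj
      exact ⟨f j, ⟨j, rfl⟩, hadj⟩
  · intro h f hf v _
    exact h f hf v
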